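/- For every τ ∈ ℂ and every x ∈ ℂ, the derivative of the Hermite function satisfies the recurrence H_τ'(x) = 2τ·H_{τ−1}(x). -/

import Mathlib

open Complex MeasureTheory Filter Topology

/-- Pochhammer symbol `(a)_m = a (a+1) ⋯ (a+m-1)` for complex `a`. -/
noncomputable def cPoch (a : ℂ) (m : ℕ) : ℂ := ∏ k ∈ Finset.range m, (a + k)

/-- Confluent hypergeometric function `₁F₁(a, b, z) = Σ (a)_m / (b)_m · z^m / m!`. -/
noncomputable def oneF1 (a b z : ℂ) : ℂ :=
  ∑' m : ℕ, (cPoch a m / cPoch b m) * z ^ m / (Nat.factorial m : ℂ)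

/-- The Hermite function `H_τ` of complex degree `τ`. -/
noncomputable def hermiteFn (τ x : ℂ) : ℂ :=
  2 ^ τ * (Complex.Gamma (1 / 2) / Complex.Gamma ((1 - τ) / 2)) *
      oneF1 (-τ / 2) (1 / 2) (x ^ 2) +
    2 ^ τ * x * (Complex.Gamma (-(1 / 2)) / Complex.Gamma (-τ / 2)) *
      oneF1 ((1 - τ) / 2) (3 / 2) (x ^ 2)

/-- Moments of the generalized Hermite linear functional `𝒢_H(τ)`:
`m_{2k}(τ) = (τ+1)_{2k} / (k! 2^{2k})` and `m_{2k+1}(τ) = 0`. -/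
noncomputable def genHermiteMoment (τ : ℂ) (n : ℕ) : ℂ :=
  if n % 2 = 0 then cPoch (τ + 1) n / (((n / 2).factorial : ℂ) * 2 ^ n) else 0

/-! ### Auxiliary definitions and lemmas -/

/-- The `m`-th term of the `₁F₁` series. -/
noncomputable def F1term (a b z : ℂ) (m : ℕ) : ℂ :=
  (cPoch a m / cPoch b m) * z ^ m / (Nat.factorial m : ℂ)

/-- The `m`-th term of the derivative of the `₁F₁` series. -/
noncomputable def F1dterm (a b z : ℂ) (m : ℕ) : ℂ :=
  (cPoch a m / cPoch b m) * ((m : ℂ) * z ^ (m - 1)) / (Nat.factorial m : ℂ)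

lemma oneF1_eq (a b z : ℂ) : oneF1 a b z = ∑' m : ℕ, F1term a b z m := rfl

lemma cPoch_succ (a : ℂ) (m : ℕ) : cPoch a (m + 1) = cPoch a m * (a + m) :=
  Finset.prod_range_succ _ _

lemma cPoch_succ' (a : ℂ) (m : ℕ) : cPoch a (m + 1) = a * cPoch (a + 1) m := by
  rw [cPoch, Finset.prod_range_succ']
  simp only [Nat.cast_zero, add_zero]
  rw [mul_comm]
  congr 1
  exact Finset.prod_congr rfl fun k _ => by push_cast; ring

lemma cPoch_ne_zero {b : ℂ} (hb : ∀ m : ℕ, b + m ≠ 0) (m : ℕ) : cPoch b m ≠ 0 :=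
  Finset.prod_ne_zero_iff.2 fun k _ => hb k

lemma F1term_succ (a b z : ℂ) (m : ℕ) :
    F1term a b z (m + 1) = F1term a b z m * ((a + m) * z / ((b + m) * ((m : ℂ) + 1))) := by
  have key : ∀ P Q A B M C w v : ℂ,
      P * A / (Q * B) * (w * v) / (C * M) = P / Q * w / M * (A * v / (B * C)) := by
    intros; ring
  simp only [F1term, cPoch_succ, pow_succ, Nat.factorial_succ]
  push_cast
  exact key (cPoch a m) (cPoch b m) (a + (m : ℂ)) (b + (m : ℂ)) ((m.factorial : ℂ))
    ((m : ℂ) + 1) (z ^ m) z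

lemma F1dterm_succ (a b z : ℂ) (m : ℕ) :
    F1dterm a b z (m + 1) = a / b * F1term (a + 1) (b + 1) z m := by
  have hm : ((m : ℂ) + 1) ≠ 0 := by
    have := Nat.cast_add_one_ne_zero (R := ℂ) m
    push_cast at this
    exact this
  simp only [F1dterm, F1term, cPoch_succ', Nat.factorial_succ, Nat.add_sub_cancel]
  push_cast
  rw [mul_div_assoc, mul_div_mul_left _ _ hm]
  ring

lemma summable_F1term (a b z : ℂ) : Summable (F1term a b z) := by
  apply summable_of_ratio_norm_eventually_le (r := 1 / 2) (by norm_num)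
  have h1 : ∀ᶠ m : ℕ in atTop, ‖a‖ ≤ (m : ℝ) :=
    (tendsto_natCast_atTop_atTop (R := ℝ)).eventually_ge_atTop ‖a‖
  have h2 : ∀ᶠ m : ℕ in atTop, 2 * ‖b‖ ≤ (m : ℝ) :=
    (tendsto_natCast_atTop_atTop (R := ℝ)).eventually_ge_atTop (2 * ‖b‖)
  have h3 : ∀ᶠ m : ℕ in atTop, 8 * ‖z‖ ≤ (m : ℝ) + 1 := by
    filter_upwards [(tendsto_natCast_atTop_atTop (R := ℝ)).eventually_ge_atTop (8 * ‖z‖)]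
      with m hm
    linarith
  filter_upwards [h1, h2, h3, eventually_gt_atTop 0] with m ha hb hz hm
  have hm0 : (0 : ℝ) < (m : ℝ) := by exact_mod_cast hm
  rw [F1term_succ, norm_mul, mul_comm (1 / 2 : ℝ)]
  apply mul_le_mul_of_nonneg_left _ (norm_nonneg _)
  have hnum : ‖(a + (m : ℂ)) * z‖ ≤ 2 * (m : ℝ) * ‖z‖ := by
    rw [norm_mul]
    apply mul_le_mul_of_nonneg_right _ (norm_nonneg z)
    calc ‖a + (m : ℂ)‖ ≤ ‖a‖ + ‖(m : ℂ)‖ := norm_add_le _ _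
      _ = ‖a‖ + (m : ℝ) := by rw [Complex.norm_natCast]
      _ ≤ 2 * (m : ℝ) := by linarith
  have hden : (m : ℝ) / 2 * ((m : ℝ) + 1) ≤ ‖(b + (m : ℂ)) * ((m : ℂ) + 1)‖ := by
    rw [norm_mul]
    have h1' : ‖(m : ℂ) + 1‖ = (m : ℝ) + 1 := by
      rw [show ((m : ℂ) + 1) = ((m + 1 : ℕ) : ℂ) by push_cast; ring, Complex.norm_natCast]
      push_cast; ring
    rw [h1']
    apply mul_le_mul_of_nonneg_right _ (by linarith)
    have hb' : ‖(m : ℂ)‖ - ‖b‖ ≤ ‖b + (m : ℂ)‖ := by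
      have h := norm_sub_norm_le ((m : ℂ)) (-b)
      simpa [sub_neg_eq_add, add_comm] using h
    rw [Complex.norm_natCast] at hb'
    linarith
  rw [norm_div]
  have hdpos : (0 : ℝ) < (m : ℝ) / 2 * ((m : ℝ) + 1) := by positivity
  calc ‖(a + (m : ℂ)) * z‖ / ‖(b + (m : ℂ)) * ((m : ℂ) + 1)‖
      ≤ 2 * (m : ℝ) * ‖z‖ / ((m : ℝ) / 2 * ((m : ℝ) + 1)) :=
        div_le_div₀ (by positivity) hnum hdpos hden
    _ ≤ 1 / 2 := by
        rw [div_le_div_iff₀ hdpos (by norm_num)]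
        nlinarith [norm_nonneg z, mul_le_mul_of_nonneg_left hz hm0.le]

lemma summable_F1dterm (a b z : ℂ) : Summable (F1dterm a b z) := by
  refine (summable_nat_add_iff 1).mp ?_
  simp only [F1dterm_succ]
  exact (summable_F1term (a + 1) (b + 1) z).mul_left _

lemma oneF1_hasDerivAt (a b z : ℂ) :
    HasDerivAt (oneF1 a b) (a / b * oneF1 (a + 1) (b + 1) z) z := by
  set R : ℝ := ‖z‖ + 1 with hR
  have hR0 : (0 : ℝ) ≤ R := by positivity
  have hzR : z ∈ Metric.ball (0 : ℂ) R := by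
    rw [Metric.mem_ball, dist_zero_right]
    simp only [hR]; linarith
  have hterm : ∀ (m : ℕ), ∀ y ∈ Metric.ball (0 : ℂ) R,
      HasDerivAt (fun w => F1term a b w m) (F1dterm a b y m) y := by
    intro m y _
    simpa only [F1term, F1dterm] using
      ((hasDerivAt_pow m y).const_mul (cPoch a m / cPoch b m)).div_const (m.factorial : ℂ)
  have hbound : ∀ (m : ℕ), ∀ y ∈ Metric.ball (0 : ℂ) R,
      ‖F1dterm a b y m‖ ≤ ‖F1dterm a b (R : ℂ) m‖ := by
    intro m y hy
    rw [Metric.mem_ball, dist_zero_right] at hy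
    simp only [F1dterm, norm_div, norm_mul, norm_pow, Complex.norm_natCast,
      Complex.norm_real, Real.norm_eq_abs, _root_.abs_of_nonneg hR0]
    gcongr
  have hu : Summable (fun m => ‖F1dterm a b (R : ℂ) m‖) :=
    summable_norm_iff.mpr (summable_F1dterm a b (R : ℂ))
  have key := hasDerivAt_tsum_of_isPreconnected hu Metric.isOpen_ball
    (convex_ball (0 : ℂ) R).isPreconnected hterm hbound hzR (summable_F1term a b z) hzR
  have hval : ∑' m : ℕ, F1dterm a b z m = a / b * oneF1 (a + 1) (b + 1) z := by
    rw [Summable.tsum_eq_zero_add (summable_F1dterm a b z)]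
    simp only [F1dterm_succ]
    rw [tsum_mul_left, ← oneF1_eq]
    simp [F1dterm]
  rw [hval] at key
  exact key

lemma oneF1_contig (a b z : ℂ) (hb : ∀ m : ℕ, b + m ≠ 0) :
    oneF1 a b z = oneF1 a (b + 1) z + a * z / (b * (b + 1)) * oneF1 (a + 1) (b + 2) z := by
  have hS := summable_F1term a b z
  have hT := summable_F1term a (b + 1) z
  have hb0 : b ≠ 0 := by simpa using hb 0
  have hb1 : b + 1 ≠ 0 := by simpa using hb 1
  have helper : ∀ (av Pa P2 Bv B1 C Mv Fv w v : ℂ), Bv ≠ 0 → B1 ≠ 0 → P2 ≠ 0 →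
      C ≠ 0 → Mv ≠ 0 → Fv ≠ 0 → C = Bv + Mv →
      av * Pa / (Bv * (B1 * P2 / C)) * (w * v) / (Mv * Fv) -
          av * Pa / (B1 * P2) * (w * v) / (Mv * Fv)
        = av * v / (Bv * B1) * (Pa / P2 * w / Fv) := by
    intro av Pa P2 Bv B1 C Mv Fv w v h1 h2 h3 h4 h5 h6 h7
    subst h7
    have frac4 : ∀ x y u v : ℂ, x / y * u / v = x * u / (y * v) := by
      intros; rw [div_mul_eq_mul_div, div_div]
    rw [frac4, frac4, frac4, div_mul_div_comm]
    rw [show Bv * (B1 * P2 / (Bv + Mv)) * (Mv * Fv)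
        = Bv * B1 * P2 * (Mv * Fv) / (Bv + Mv) by ring, div_div_eq_mul_div]
    rw [div_sub_div _ _ (by simp [h1, h2, h3, h5, h6] : Bv * B1 * P2 * (Mv * Fv) ≠ 0)
        (by simp [h2, h3, h5, h6] : B1 * P2 * (Mv * Fv) ≠ 0),
      div_eq_div_iff (by simp [h1, h2, h3, h5, h6] :
          Bv * B1 * P2 * (Mv * Fv) * (B1 * P2 * (Mv * Fv)) ≠ 0)
        (by simp [h1, h2, h3, h6] : Bv * B1 * (P2 * Fv) ≠ 0)]
    ring
  have key : ∀ m : ℕ, F1term a b z (m + 1) - F1term a (b + 1) z (m + 1)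
      = a * z / (b * (b + 1)) * F1term (a + 1) (b + 2) z m := by
    intro m
    have hbm : b + 1 + (m : ℂ) ≠ 0 := by
      have h := hb (m + 1)
      push_cast at h
      intro h2; apply h; rw [← h2]; ring
    have hP2 : cPoch (b + 2) m ≠ 0 := by
      refine cPoch_ne_zero (fun k => ?_) m
      have h := hb (k + 2)
      push_cast at h
      intro h2; apply h; rw [← h2]; ring
    have hrel : cPoch (b + 1) m = (b + 1) * cPoch (b + 2) m / (b + 1 + (m : ℂ)) := by
      rw [eq_div_iff hbm, ← cPoch_succ, cPoch_succ', show b + 1 + 1 = b + 2 by ring]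
    have hm1 : ((m : ℂ) + 1) ≠ 0 := by
      have := Nat.cast_add_one_ne_zero (R := ℂ) m
      push_cast at this
      exact this
    have hfac : ((m.factorial : ℕ) : ℂ) ≠ 0 := Nat.cast_ne_zero.mpr m.factorial_ne_zero
    simp only [F1term, cPoch_succ', Nat.factorial_succ, pow_succ,
      show b + 1 + 1 = b + 2 from by ring]
    rw [hrel]
    push_cast
    exact helper a (cPoch (a + 1) m) (cPoch (b + 2) m) b (b + 1) (b + 1 + (m : ℂ))
      ((m : ℂ) + 1) ((m.factorial : ℕ) : ℂ) (z ^ m) z hb0 hb1 hP2 hbm hm1 hfac (by ring)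
  have hV : Summable (fun m => F1term a b z m - F1term a (b + 1) z m) := hS.sub hT
  have h1 : oneF1 a b z - oneF1 a (b + 1) z
      = a * z / (b * (b + 1)) * oneF1 (a + 1) (b + 2) z := by
    rw [oneF1_eq, oneF1_eq, ← Summable.tsum_sub hS hT, Summable.tsum_eq_zero_add hV]
    simp only [key]
    rw [tsum_mul_left, ← oneF1_eq]
    simp [F1term, cPoch]
  linear_combination h1

theorem hermiteFn_deriv (τ x : ℂ) :
    deriv (hermiteFn τ) x = 2 * τ * hermiteFn (τ - 1) x := by
  have h2x : HasDerivAt (fun y : ℂ => y ^ 2) (2 * x) x := by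
    simpa using hasDerivAt_pow 2 x
  have hfe : HasDerivAt (fun y : ℂ => oneF1 (-τ / 2) (1 / 2) (y ^ 2))
      (-τ * oneF1 ((2 - τ) / 2) (3 / 2) (x ^ 2) * (2 * x)) x := by
    have h := oneF1_hasDerivAt (-τ / 2) (1 / 2) (x ^ 2)
    rw [show -τ / 2 + 1 = (2 - τ) / 2 by ring, show (1 : ℂ) / 2 + 1 = 3 / 2 by norm_num,
      show -τ / 2 / ((1 : ℂ) / 2) = -τ by ring] at h
    exact h.comp x h2x
  have hgx : HasDerivAt (fun y : ℂ => oneF1 ((1 - τ) / 2) (3 / 2) (y ^ 2))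
      ((1 - τ) / 3 * oneF1 ((3 - τ) / 2) (5 / 2) (x ^ 2) * (2 * x)) x := by
    have h := oneF1_hasDerivAt ((1 - τ) / 2) (3 / 2) (x ^ 2)
    rw [show (1 - τ) / 2 + 1 = (3 - τ) / 2 by ring, show (3 : ℂ) / 2 + 1 = 5 / 2 by norm_num,
      show (1 - τ) / 2 / ((3 : ℂ) / 2) = (1 - τ) / 3 by ring] at h
    exact h.comp x h2x
  have hde : HasDerivAt
      (fun y : ℂ => 2 ^ τ * (Complex.Gamma (1 / 2) / Complex.Gamma ((1 - τ) / 2)) *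
        oneF1 (-τ / 2) (1 / 2) (y ^ 2))
      (2 ^ τ * (Complex.Gamma (1 / 2) / Complex.Gamma ((1 - τ) / 2)) *
        (-τ * oneF1 ((2 - τ) / 2) (3 / 2) (x ^ 2) * (2 * x))) x :=
    hfe.const_mul _
  have hlin : HasDerivAt
      (fun y : ℂ => 2 ^ τ * y * (Complex.Gamma (-(1 / 2)) / Complex.Gamma (-τ / 2)))
      (2 ^ τ * 1 * (Complex.Gamma (-(1 / 2)) / Complex.Gamma (-τ / 2))) x :=
    ((hasDerivAt_id x).const_mul ((2 : ℂ) ^ τ)).mul_const _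
  have hdo := hlin.mul hgx
  have HD : HasDerivAt (hermiteFn τ)
      (2 ^ τ * (Complex.Gamma (1 / 2) / Complex.Gamma ((1 - τ) / 2)) *
          (-τ * oneF1 ((2 - τ) / 2) (3 / 2) (x ^ 2) * (2 * x)) +
        (2 ^ τ * 1 * (Complex.Gamma (-(1 / 2)) / Complex.Gamma (-τ / 2)) *
            oneF1 ((1 - τ) / 2) (3 / 2) (x ^ 2) +
          2 ^ τ * x * (Complex.Gamma (-(1 / 2)) / Complex.Gamma (-τ / 2)) *
            ((1 - τ) / 3 * oneF1 ((3 - τ) / 2) (5 / 2) (x ^ 2) * (2 * x)))) x := by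
    unfold hermiteFn
    exact hde.add hdo
  rw [HD.deriv]
  have hhalf : ∀ m : ℕ, (1 : ℂ) / 2 + m ≠ 0 := by
    intro m
    have he : ((1 : ℂ) / 2 + m) = (((1 / 2 + m : ℝ)) : ℂ) := by push_cast; ring
    rw [he, Complex.ofReal_ne_zero]
    positivity
  have hγ1 : Complex.Gamma (-(1 / 2)) = -2 * Complex.Gamma (1 / 2) := by
    have h := Complex.Gamma_add_one (-(1 / 2)) (by norm_num)
    rw [show (-(1 / 2) + 1 : ℂ) = 1 / 2 by norm_num] at h
    linear_combination 2 * h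
  have hγ2 : -2 / Complex.Gamma (-τ / 2) = τ / Complex.Gamma ((2 - τ) / 2) := by
    rcases eq_or_ne τ 0 with h | h
    · subst h
      norm_num [Complex.Gamma_zero]
    · have hτ2 : -τ / 2 ≠ 0 := by
        simpa using div_ne_zero (neg_ne_zero.mpr h) (two_ne_zero)
      have hg := Complex.Gamma_add_one (-τ / 2) hτ2
      rw [show -τ / 2 + 1 = (2 - τ) / 2 by ring] at hg
      rw [hg]
      rcases eq_or_ne (Complex.Gamma (-τ / 2)) 0 with h0 | h0
      · rw [h0]; simp
      · field_simp
  have hpow : (2 : ℂ) ^ (τ - 1) * 2 = 2 ^ τ := by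
    calc (2 : ℂ) ^ (τ - 1) * 2 = 2 ^ (τ - 1) * 2 ^ (1 : ℂ) := by rw [Complex.cpow_one]
      _ = 2 ^ (τ - 1 + 1) := (cpow_add _ _ (by norm_num)).symm
      _ = 2 ^ τ := congrArg (fun s : ℂ => (2 : ℂ) ^ s) (by ring)
  have hcont := oneF1_contig ((1 - τ) / 2) (1 / 2) (x ^ 2) hhalf
  rw [show (1 : ℂ) / 2 + 1 = 3 / 2 by norm_num, show (1 : ℂ) / 2 + 2 = 5 / 2 by norm_num,
    show (1 - τ) / 2 + 1 = (3 - τ) / 2 by ring] at hcont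
  simp only [hermiteFn]
  rw [show (1 - (τ - 1)) / 2 = (2 - τ) / 2 by ring, show -(τ - 1) / 2 = (1 - τ) / 2 by ring]
  rw [hcont, hγ1, ← hpow]
  linear_combination (2 * (2 : ℂ) ^ (τ - 1) * Complex.Gamma (1 / 2) *
      oneF1 ((1 - τ) / 2) (3 / 2) (x ^ 2) +
    (4 / 3) * (1 - τ) * x ^ 2 * (2 : ℂ) ^ (τ - 1) * Complex.Gamma (1 / 2) *
      oneF1 ((3 - τ) / 2) (5 / 2) (x ^ 2)) * hγ2
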